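/- Christofides combination bound: let G = (V,E) be a complete graph with edge weights d satisfying the triangle inequality, T a spanning tree, M a perfect matching on the odd-degree vertices of T, T* a minimum spanning tree, M* a minimum-weight perfect matching on those odd-degree vertices, and A the Hamiltonian cycle from shortcutting an Eulerian circuit of T ∪ M. If A* is an optimal TSP tour, then (2/3)·w(A) − w(A*) ≤ (2/3)·(w(T) − w(T*) + w(M) − w(M*)), where w denotes total edge weight. -/

import Mathlib

open Finset

/-- The weight of an (undirected) edge, given a symmetrized distance function. -/
noncomputable def edgeWeight {V : Type*} (d : V → V → ℝ) : Sym2 V → ℝ :=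
  Sym2.lift ⟨fun a b => (d a b + d b a) / 2, fun a b => by ring⟩

/-- Total weight of a finite set of edges. -/
noncomputable def setWeight {V : Type*} (d : V → V → ℝ) (S : Finset (Sym2 V)) : ℝ :=
  ∑ e ∈ S, edgeWeight d e

/-- A spanning tree of the complete graph on `V`, given as its edge set:
non-loop edges, connected, and exactly `|V| - 1` edges. -/
def IsSpanningTree {V : Type*} [Fintype V] (T : Finset (Sym2 V)) : Prop :=
  (∀ e ∈ T, ¬ e.IsDiag) ∧ (SimpleGraph.fromEdgeSet (↑T : Set (Sym2 V))).Connected ∧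
    T.card = Fintype.card V - 1

/-- A perfect matching on the vertex set `U`, given as its edge set: non-loop edges
such that every vertex of `U` lies on exactly one edge, and no other vertex on any. -/
def IsPerfectMatchingOn {V : Type*} [DecidableEq V] (U : Finset V)
    (M : Finset (Sym2 V)) : Prop :=
  (∀ e ∈ M, ¬ e.IsDiag) ∧
    ∀ v : V, (M.filter fun e => v ∈ e).card = if v ∈ U then 1 else 0

/-- The set of vertices of odd degree in an edge set. -/
def oddVerts {V : Type*} [Fintype V] [DecidableEq V] (T : Finset (Sym2 V)) : Finset V :=
  univ.filter fun v => Odd (T.filter fun e => v ∈ e).card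

/-- The weight of the Hamiltonian tour visiting the vertices in the cyclic order `σ`. -/
noncomputable def tourWeight {V : Type*} (d : V → V → ℝ) {n : ℕ} [NeZero n]
    (σ : Fin n ≃ V) : ℝ :=
  ∑ i : Fin n, d (σ i) (σ (i + 1))

/-! ### Auxiliary lemmas -/

open Fin.NatCast

lemma chr_ew_mk {V : Type*} (d : V → V → ℝ) (hdsym : ∀ a b, d a b = d b a) (a b : V) :
    edgeWeight d s(a, b) = d a b := by
  show (d a b + d b a) / 2 = d a b
  rw [hdsym b a]; ring

lemma chr_sum_image_le {α β : Type*} [DecidableEq β] (s : Finset α) (f : α → β) (g : β → ℝ)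
    (h : ∀ x ∈ s, 0 ≤ g (f x)) : ∑ b ∈ s.image f, g b ≤ ∑ a ∈ s, g (f a) := by
  classical
  induction s using Finset.induction_on with
  | empty => simp
  | insert a s hx ih =>
    rw [Finset.image_insert, Finset.sum_insert hx]
    by_cases hfa : f a ∈ s.image f
    · rw [Finset.insert_eq_self.mpr hfa]
      have := ih (fun x hx => h x (Finset.mem_insert_of_mem hx))
      have h0 := h a (Finset.mem_insert_self a s)
      linarith
    · rw [Finset.sum_insert hfa]
      have := ih (fun x hx => h x (Finset.mem_insert_of_mem hx))
      linarith

lemma chr_tour_eq {V : Type*} {n : ℕ} [NeZero n] (d : V → V → ℝ) (σ : Fin n ≃ V) :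
    tourWeight d σ = ∑ t ∈ range n, d (σ (t : Fin n)) (σ ((t + 1 : ℕ) : Fin n)) := by
  rw [tourWeight, Finset.sum_range]
  apply Finset.sum_congr rfl
  intro i _
  congr 1
  · congr 1; exact (Fin.cast_val_eq_self i).symm
  · congr 1
    show i + 1 = ((i.val + 1 : ℕ) : Fin n)
    push_cast
    rfl

lemma chr_chain {V : Type*} {n : ℕ} [NeZero n] (d : V → V → ℝ)
    (hdtri : ∀ a b c, d a c ≤ d a b + d b c) (σ : Fin n ≃ V) :
    ∀ b a : ℕ, a < b → d (σ (a : Fin n)) (σ (b : Fin n)) ≤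
      ∑ t ∈ Finset.Ico a b, d (σ (t : Fin n)) (σ ((t + 1 : ℕ) : Fin n)) := by
  intro b
  induction b with
  | zero => omega
  | succ b ih =>
    intro a ha
    rcases Nat.lt_succ_iff_lt_or_eq.mp ha with h | h
    · calc d (σ (a : Fin n)) (σ ((b + 1 : ℕ) : Fin n))
          ≤ d (σ (a : Fin n)) (σ (b : Fin n)) +
            d (σ (b : Fin n)) (σ ((b + 1 : ℕ) : Fin n)) := hdtri _ _ _
        _ ≤ _ := by
            rw [Finset.sum_Ico_succ_top (by omega : a ≤ b)]
            have := ih a h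
            linarith
    · subst h
      rw [Finset.sum_Ico_succ_top (le_refl a), Finset.Ico_self, Finset.sum_empty, zero_add]

lemma chr_even_oddVerts {V : Type*} [Fintype V] [DecidableEq V] (T : Finset (Sym2 V))
    (hdiag : ∀ e ∈ T, ¬ e.IsDiag) : Even (oddVerts T).card := by
  classical
  have hin : ∀ e ∈ T, (∑ v : V, if v ∈ e then 1 else 0) = 2 := by
    intro e
    induction e with
    | h a b =>
      intro he
      have hab : a ≠ b := by
        intro h; exact hdiag _ he (by rw [h]; exact Sym2.mk_isDiag_iff.mpr rfl)
      rw [← Finset.card_filter]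
      have : (univ.filter fun v : V => v ∈ s(a, b)) = {a, b} := by
        ext v; simp [Sym2.mem_iff]
      rw [this, Finset.card_insert_of_notMem (by simp [hab]), Finset.card_singleton]
  have htot : ∑ v : V, (T.filter fun e => v ∈ e).card = 2 * T.card := by
    have h0 : ∀ v : V, (T.filter fun e => v ∈ e).card = ∑ e ∈ T, if v ∈ e then 1 else 0 :=
      fun v => Finset.card_filter _ _
    simp_rw [h0]
    rw [Finset.sum_comm, Finset.sum_congr rfl hin, Finset.sum_const, smul_eq_mul, mul_comm]
  have hz : ((oddVerts T).card : ZMod 2) = 0 := by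
    have h1 : ((∑ v : V, (T.filter fun e => v ∈ e).card : ℕ) : ZMod 2) = 0 := by
      rw [htot]; push_cast
      rw [show (2 : ZMod 2) = 0 by decide, zero_mul]
    rw [Nat.cast_sum] at h1
    have h2 : ∀ v : V, (((T.filter fun e => v ∈ e).card : ℕ) : ZMod 2) =
        if v ∈ oddVerts T then 1 else 0 := by
      intro v
      by_cases hv : v ∈ oddVerts T
      · simp only [hv, if_true]
        obtain ⟨r, hr⟩ := (Finset.mem_filter.mp hv).2
        rw [hr]; push_cast
        rw [show (2 : ZMod 2) = 0 by decide]; ring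
      · simp only [hv, if_false]
        have : ¬ Odd (T.filter fun e => v ∈ e).card := by
          intro h; exact hv (Finset.mem_filter.mpr ⟨Finset.mem_univ v, h⟩)
        obtain ⟨r, hr⟩ := Nat.not_odd_iff_even.mp this
        rw [hr]; push_cast; ring_nf
        rw [show (2 : ZMod 2) = 0 by decide, mul_zero]
    rw [Finset.sum_congr rfl (fun v _ => h2 v), Finset.sum_ite_mem, Finset.univ_inter,
      Finset.sum_const, nsmul_eq_mul, mul_one] at h1
    exact h1
  rwa [ZMod.natCast_eq_zero_iff, ← even_iff_two_dvd] at hz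

lemma chr_tour_nonneg {V : Type*} {n : ℕ} [NeZero n] (d : V → V → ℝ)
    (hd0 : ∀ a b, 0 ≤ d a b) (σ : Fin n ≃ V) : 0 ≤ tourWeight d σ :=
  Finset.sum_nonneg fun i _ => hd0 _ _

lemma chr_tree_of_tour {V : Type*} [Fintype V] [DecidableEq V] {n : ℕ} [NeZero n]
    (hn : n = Fintype.card V) (hn2 : 2 ≤ n) (d : V → V → ℝ)
    (hd0 : ∀ a b, 0 ≤ d a b) (hdsym : ∀ a b, d a b = d b a) (σ : Fin n ≃ V) :
    ∃ T' : Finset (Sym2 V), IsSpanningTree T' ∧ setWeight d T' ≤ tourWeight d σ := by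
  classical
  set f : ℕ → Sym2 V := fun t => s(σ (t : Fin n), σ ((t + 1 : ℕ) : Fin n)) with hf
  have hv : ∀ c : ℕ, c < n → ((c : Fin n)).val = c := fun c hc => by
    rw [Fin.val_natCast]; exact Nat.mod_eq_of_lt hc
  have hinj : Set.InjOn f ↑(range (n - 1)) := by
    intro a ha b hb h
    rw [Finset.mem_coe, Finset.mem_range] at ha hb
    rw [hf] at h
    rw [Sym2.eq_iff] at h
    rcases h with ⟨h1, _⟩ | ⟨h1, h2⟩
    · have := congrArg Fin.val (σ.injective h1)
      rwa [hv a (by omega), hv b (by omega)] at this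
    · have ha1 := congrArg Fin.val (σ.injective h1)
      have hb1 := congrArg Fin.val (σ.injective h2)
      rw [hv a (by omega), hv (b + 1) (by omega)] at ha1
      rw [hv (a + 1) (by omega), hv b (by omega)] at hb1
      omega
  refine ⟨(range (n - 1)).image f, ⟨?_, ?_, ?_⟩, ?_⟩
  · intro e he
    obtain ⟨t, ht, rfl⟩ := Finset.mem_image.mp he
    rw [Finset.mem_range] at ht
    rw [hf]
    simp only [Sym2.mk_isDiag_iff]
    intro h
    have := congrArg Fin.val (σ.injective h)
    rw [hv t (by omega), hv (t + 1) (by omega)] at this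
    omega
  · have hreach : ∀ t : ℕ, t < n →
        (SimpleGraph.fromEdgeSet (↑((range (n - 1)).image f) : Set (Sym2 V))).Reachable
          (σ ((0 : ℕ) : Fin n)) (σ (t : Fin n)) := by
      intro t
      induction t with
      | zero => intro _; exact SimpleGraph.Reachable.refl _
      | succ t ih =>
        intro h
        refine (ih (by omega)).trans (SimpleGraph.Adj.reachable ?_)
        rw [SimpleGraph.fromEdgeSet_adj]
        constructor
        · exact Finset.mem_coe.mpr (Finset.mem_image.mpr ⟨t, Finset.mem_range.mpr (by omega), rfl⟩)
        · intro hc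
          have := congrArg Fin.val (σ.injective hc)
          rw [hv t (by omega), hv (t + 1) (by omega)] at this
          omega
    rw [SimpleGraph.connected_iff]
    constructor
    · intro a b
      have ha := hreach (σ.symm a).val (σ.symm a).isLt
      have hb := hreach (σ.symm b).val (σ.symm b).isLt
      rw [Fin.cast_val_eq_self, Equiv.apply_symm_apply] at ha hb
      exact ha.symm.trans hb
    · exact ⟨σ 0⟩
  · rw [Finset.card_image_of_injOn hinj, Finset.card_range, hn]
  · rw [setWeight, Finset.sum_image (fun a ha b hb h => hinj ha hb h)]
    have h1 : ∑ t ∈ range (n - 1), edgeWeight d (f t) =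
        ∑ t ∈ range (n - 1), d (σ (t : Fin n)) (σ ((t + 1 : ℕ) : Fin n)) :=
      Finset.sum_congr rfl fun t _ => chr_ew_mk d hdsym _ _
    rw [h1, chr_tour_eq d σ]
    exact Finset.sum_le_sum_of_subset_of_nonneg (Finset.range_subset_range.mpr (by omega))
      (fun i _ _ => hd0 _ _)

lemma chr_matchings_of_tour {V : Type*} [Fintype V] [DecidableEq V] {n : ℕ} [NeZero n]
    (d : V → V → ℝ) (hd0 : ∀ a b, 0 ≤ d a b) (hdsym : ∀ a b, d a b = d b a)
    (hdtri : ∀ a b c, d a c ≤ d a b + d b c) (σ : Fin n ≃ V)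
    (U : Finset V) (k : ℕ) (hk : 0 < k) (hU : U.card = 2 * k) :
    ∃ M1 M2 : Finset (Sym2 V), IsPerfectMatchingOn U M1 ∧ IsPerfectMatchingOn U M2 ∧
      setWeight d M1 + setWeight d M2 ≤ tourWeight d σ := by
  classical
  set m := 2 * k with hm
  have hm2 : 2 ≤ m := by omega
  have hmz : NeZero m := ⟨by omega⟩
  -- the positions of the vertices of U along the tour
  set S : Finset (Fin n) := univ.filter (fun i => σ i ∈ U) with hS
  have hScard : S.card = m := by
    have himg : S.image σ = U := by
      ext v
      simp only [Finset.mem_image]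
      constructor
      · rintro ⟨i, hi, rfl⟩; exact (Finset.mem_filter.mp hi).2
      · intro hv
        exact ⟨σ.symm v, Finset.mem_filter.mpr ⟨Finset.mem_univ _, by simp [hv]⟩, by simp⟩
    rw [← hU, ← himg, Finset.card_image_of_injective _ σ.injective]
  set p : Fin m → Fin n := fun j => ((S.orderIsoOfFin hScard j : Fin n)) with hp
  have hpS : ∀ j, p j ∈ S := fun j => (S.orderIsoOfFin hScard j).2
  have hpmono : StrictMono p := fun a b h => (S.orderIsoOfFin hScard).strictMono h
  set x : Fin m → V := fun j => σ (p j) with hx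
  have hxinj : Function.Injective x := fun a b h => hpmono.injective (σ.injective h)
  have hxU : ∀ j, x j ∈ U := fun j => (Finset.mem_filter.mp (hpS j)).2
  have hxsurj : ∀ v ∈ U, ∃ j, x j = v := by
    intro v hv
    have hiS : σ.symm v ∈ S := Finset.mem_filter.mpr ⟨Finset.mem_univ _, by simp [hv]⟩
    obtain ⟨j, hj⟩ := (S.orderIsoOfFin hScard).surjective ⟨σ.symm v, hiS⟩
    refine ⟨j, ?_⟩
    have : p j = σ.symm v := congrArg Subtype.val hj
    rw [hx]; simp only [this, Equiv.apply_symm_apply]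
  -- the key uniqueness fact
  have key : ∀ o : ℕ, o ≤ 1 → ∀ j₀ : Fin m, ∀ j : ℕ, j < k →
      ((x ((2 * j + o : ℕ) : Fin m) = x j₀ ∨ x ((2 * j + o + 1 : ℕ) : Fin m) = x j₀) ↔
        j = (j₀.val + (m - o)) % m / 2) := by
    intro o ho j₀ j hj
    obtain ⟨t, ht⟩ : ∃ t, (j₀.val + (m - o)) % m = t := ⟨_, rfl⟩
    have htlt : t < m := ht ▸ Nat.mod_lt _ (by omega)
    have helper : ∀ a : ℕ, a < m → (((a + o : ℕ) : Fin m) = j₀ ↔ a = t) := by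
      intro a ha
      rw [Fin.ext_iff, Fin.val_natCast]
      constructor
      · intro h
        have h1 : a + o ≡ j₀.val [MOD m] := by
          unfold Nat.ModEq
          rw [h, Nat.mod_eq_of_lt j₀.isLt]
        have h2 : a + o + (m - o) ≡ j₀.val + (m - o) [MOD m] := h1.add_right _
        have h3 : a + m ≡ j₀.val + (m - o) [MOD m] := by
          rwa [show a + o + (m - o) = a + m by omega] at h2
        have h4 : a ≡ j₀.val + (m - o) [MOD m] :=
          (Nat.add_mod_right a m : a + m ≡ a [MOD m]).symm.trans h3
        have h5 : a % m = (j₀.val + (m - o)) % m := h4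
        rw [Nat.mod_eq_of_lt ha] at h5
        rw [h5, ht]
      · intro h
        have h1 : a ≡ j₀.val + (m - o) [MOD m] := by
          rw [h, ← ht]; exact Nat.mod_modEq _ m
        have h2 : a + o ≡ j₀.val + (m - o) + o [MOD m] := h1.add_right o
        have h3 : a + o ≡ j₀.val + m [MOD m] := by
          rwa [show j₀.val + (m - o) + o = j₀.val + m by omega] at h2
        have h4 : a + o ≡ j₀.val [MOD m] :=
          h3.trans (Nat.add_mod_right j₀.val m : j₀.val + m ≡ j₀.val [MOD m])
        have h5 : (a + o) % m = j₀.val % m := h4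
        rwa [Nat.mod_eq_of_lt j₀.isLt] at h5
    have e1 : (x ((2 * j + o : ℕ) : Fin m) = x j₀ ↔ 2 * j = t) := by
      constructor
      · intro h
        exact (helper (2 * j) (by omega)).mp (hxinj h)
      · intro h
        have h2 := (helper (2 * j) (by omega)).mpr h
        rw [h2]
    have e2 : (x ((2 * j + o + 1 : ℕ) : Fin m) = x j₀ ↔ 2 * j + 1 = t) := by
      constructor
      · intro h
        have h2 : ((2 * j + 1 + o : ℕ) : Fin m) = j₀ := by
          rw [show 2 * j + 1 + o = 2 * j + o + 1 by omega]; exact hxinj h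
        exact (helper (2 * j + 1) (by omega)).mp h2
      · intro h
        have h2 := (helper (2 * j + 1) (by omega)).mpr h
        rw [show 2 * j + 1 + o = 2 * j + o + 1 by omega] at h2
        rw [h2]
    have hgoal : ((x ((2 * j + o : ℕ) : Fin m) = x j₀ ∨ x ((2 * j + o + 1 : ℕ) : Fin m) = x j₀)
        ↔ j = t / 2) := by
      rw [e1, e2]
      omega
    rwa [ht]
  -- a cast-equality helper: consecutive casts in `Fin m` are distinct
  have hne : ∀ a : ℕ, ((a : Fin m)) ≠ ((a + 1 : ℕ) : Fin m) := by
    intro a h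
    rw [Nat.cast_add, Nat.cast_one] at h
    have h0 : (0 : Fin m) = 1 := by
      have := add_left_cancel (a := (a : Fin m)) (b := (0 : Fin m)) (c := 1)
        (by rw [add_zero]; exact h)
      exact this
    have := congrArg Fin.val h0
    rw [Fin.val_zero, Fin.val_one', Nat.mod_eq_of_lt (by omega : 1 < m)] at this
    omega
  -- construction of the matching with offset o, o ∈ {0, 1}
  have build : ∀ o : ℕ, o ≤ 1 → ∃ Mo : Finset (Sym2 V), IsPerfectMatchingOn U Mo ∧
      setWeight d Mo ≤
        ∑ j ∈ range k, d (x ((2 * j + o : ℕ) : Fin m)) (x ((2 * j + o + 1 : ℕ) : Fin m)) := by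
    intro o ho
    set f : ℕ → Sym2 V := fun j =>
      s(x ((2 * j + o : ℕ) : Fin m), x ((2 * j + o + 1 : ℕ) : Fin m)) with hfdef
    refine ⟨(range k).image f, ⟨?_, ?_⟩, ?_⟩
    · intro e he
      obtain ⟨j, _, rfl⟩ := Finset.mem_image.mp he
      rw [hfdef]
      simp only [Sym2.mk_isDiag_iff]
      intro h
      exact hne (2 * j + o) (hxinj h)
    · intro v
      rw [Finset.filter_image]
      by_cases hv : v ∈ U
      · obtain ⟨j₀, hj₀⟩ := hxsurj v hv
        simp only [hv, if_true]
        have hfilter : (range k).filter (fun j => v ∈ f j) =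
            {(j₀.val + (m - o)) % m / 2} := by
          ext j
          simp only [Finset.mem_filter, Finset.mem_range, Finset.mem_singleton, hfdef,
            Sym2.mem_iff]
          constructor
          · rintro ⟨hjk, h⟩
            refine (key o ho j₀ j hjk).mp ?_
            rcases h with h | h
            · exact Or.inl (by rw [← h, hj₀])
            · exact Or.inr (by rw [← h, hj₀])
          · intro h
            have hjk : j < k := by
              have : (j₀.val + (m - o)) % m < m := Nat.mod_lt _ (by omega)
              omega
            refine ⟨hjk, ?_⟩
            rcases (key o ho j₀ j hjk).mpr h with h' | h'
            · exact Or.inl (by rw [h', hj₀])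
            · exact Or.inr (by rw [h', hj₀])
        rw [hfilter, Finset.image_singleton, Finset.card_singleton]
      · simp only [hv, if_false]
        have hfilter : (range k).filter (fun j => v ∈ f j) = ∅ := by
          ext j
          simp only [Finset.mem_filter, Finset.notMem_empty, iff_false, not_and, hfdef,
            Sym2.mem_iff]
          intro _
          push_neg
          constructor
          · intro h; exact hv (h ▸ hxU _)
          · intro h; exact hv (h ▸ hxU _)
        rw [hfilter, Finset.image_empty, Finset.card_empty]
    · rw [setWeight]
      calc ∑ e ∈ (range k).image f, edgeWeight d e
          ≤ ∑ j ∈ range k, edgeWeight d (f j) := by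
            apply chr_sum_image_le
            intro j _
            rw [hfdef, chr_ew_mk d hdsym]
            exact hd0 _ _
        _ = _ := Finset.sum_congr rfl fun j _ => by rw [hfdef, chr_ew_mk d hdsym]
  obtain ⟨M1, hM1, hw1⟩ := build 0 (by omega)
  obtain ⟨M2, hM2, hw2⟩ := build 1 (by omega)
  refine ⟨M1, M2, hM1, hM2, ?_⟩
  -- now the total bound
  set c : ℕ → ℝ := fun j => d (x (j : Fin m)) (x ((j + 1 : ℕ) : Fin m)) with hc
  have hpair : ∀ (c : ℕ → ℝ) (r : ℕ),
      ∑ j ∈ range (2 * r), c j = ∑ j ∈ range r, (c (2 * j) + c (2 * j + 1)) := by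
    intro c r
    induction r with
    | zero => simp
    | succ r ih =>
      rw [Finset.sum_range_succ, ← ih, show 2 * (r + 1) = (2 * r) + 1 + 1 by ring,
        Finset.sum_range_succ, Finset.sum_range_succ]
      ring
  have hsum12 : (∑ j ∈ range k, d (x ((2 * j + 0 : ℕ) : Fin m)) (x ((2 * j + 0 + 1 : ℕ) : Fin m)))
      + (∑ j ∈ range k, d (x ((2 * j + 1 : ℕ) : Fin m)) (x ((2 * j + 1 + 1 : ℕ) : Fin m)))
      = ∑ j ∈ range m, c j := by
    rw [show (range m) = range (2 * k) from rfl, hpair c k, ← Finset.sum_add_distrib]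
    apply Finset.sum_congr rfl
    intro j _
    rw [hc]
    norm_num
  set g : ℕ → ℝ := fun t => d (σ (t : Fin n)) (σ ((t + 1 : ℕ) : Fin n)) with hg
  have hcast : ∀ i : ℕ, ((n + i : ℕ) : Fin n) = ((i : ℕ) : Fin n) := by
    intro i
    push_cast
    rw [Fin.natCast_self, zero_add]
  have hgper : ∀ i : ℕ, g (n + i) = g i := by
    intro i
    rw [hg]
    simp only
    rw [hcast i, show n + i + 1 = n + (i + 1) by omega, hcast (i + 1)]
  set pn : ℕ → ℕ := fun j => if h : j < m then (p ⟨j, h⟩).val else n with hpn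
  have hpn_lt : ∀ j, j < m → pn j < n := by
    intro j h; rw [hpn]; simp only [dif_pos h]; exact (p ⟨j, h⟩).isLt
  have hpn_le : ∀ j, pn j ≤ n := by
    intro j; by_cases h : j < m
    · exact le_of_lt (hpn_lt j h)
    · rw [hpn]; simp [dif_neg h]
  have hpn_mono : ∀ a b, a < b → b < m → pn a < pn b := by
    intro a b hab hbm
    rw [hpn]; simp only [dif_pos (by omega : a < m), dif_pos hbm]
    exact hpmono (show (⟨a, by omega⟩ : Fin m) < ⟨b, hbm⟩ from hab)
  have hpn_mono' : ∀ a b, a ≤ b → b < m → pn a ≤ pn b := by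
    intro a b hab hbm
    rcases Nat.lt_or_ge a b with h | h
    · exact le_of_lt (hpn_mono a b h hbm)
    · have : a = b := by omega
      rw [this]
  have hx_pn : ∀ j, j < m → x ((j : ℕ) : Fin m) = σ ((pn j : ℕ) : Fin n) := by
    intro j h
    have h1 : ((j : ℕ) : Fin m) = ⟨j, h⟩ := by
      rw [Fin.ext_iff, Fin.val_natCast]; exact Nat.mod_eq_of_lt h
    rw [h1, hpn]
    simp only [dif_pos h, hx]
    congr 1
    exact (Fin.cast_val_eq_self _).symm
  have hchain : ∀ j, j < m - 1 → c j ≤ ∑ t ∈ Finset.Ico (pn j) (pn (j + 1)), g t := by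
    intro j hjm
    rw [hc]
    simp only
    rw [hx_pn j (by omega), hx_pn (j + 1) (by omega)]
    exact chr_chain d hdtri σ _ _ (hpn_mono j (j + 1) (by omega) (by omega))
  have h3 : ∑ t ∈ Finset.Ico n (pn 0 + n), g t = ∑ t ∈ range (pn 0), g t := by
    rw [Finset.sum_Ico_eq_sum_range, show pn 0 + n - n = pn 0 by omega]
    exact Finset.sum_congr rfl fun i _ => hgper i
  have hwrap : c (m - 1) ≤ (∑ t ∈ Finset.Ico (pn (m - 1)) n, g t) + ∑ t ∈ range (pn 0), g t := by
    have hx_m : x ((m : ℕ) : Fin m) = σ ((pn 0 : ℕ) : Fin n) := by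
      rw [Fin.natCast_self]
      have := hx_pn 0 (by omega)
      rwa [Nat.cast_zero] at this
    have hσ0 : σ ((pn 0 : ℕ) : Fin n) = σ ((pn 0 + n : ℕ) : Fin n) := by
      congr 1
      rw [show pn 0 + n = n + pn 0 by omega, hcast]
    have h1 : c (m - 1) = d (σ ((pn (m - 1) : ℕ) : Fin n)) (σ ((pn 0 + n : ℕ) : Fin n)) := by
      rw [hc]
      simp only
      rw [show m - 1 + 1 = m by omega, hx_pn (m - 1) (by omega), hx_m, hσ0]
    have h2 := chr_chain d hdtri σ (pn 0 + n) (pn (m - 1))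
      (by have := hpn_lt (m - 1) (by omega); omega)
    have hsplit : ∑ t ∈ Finset.Ico (pn (m - 1)) (pn 0 + n), g t
        = (∑ t ∈ Finset.Ico (pn (m - 1)) n, g t) + ∑ t ∈ range (pn 0), g t := by
      rw [← Finset.sum_Ico_consecutive g (hpn_le (m - 1)) (by omega : n ≤ pn 0 + n), h3]
    rw [h1]
    exact h2.trans (le_of_eq hsplit)
  have tel : ∀ r, r ≤ m - 1 → ∑ j ∈ range r, (∑ t ∈ Finset.Ico (pn j) (pn (j + 1)), g t)
      = ∑ t ∈ Finset.Ico (pn 0) (pn r), g t := by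
    intro r
    induction r with
    | zero => intro _; simp
    | succ r ih =>
      intro hr
      rw [Finset.sum_range_succ, ih (by omega),
        Finset.sum_Ico_consecutive g (hpn_mono' 0 r (by omega) (by omega))
          (hpn_mono' r (r + 1) (by omega) (by omega))]
  have hctot : ∑ j ∈ range m, c j ≤ tourWeight d σ := by
    have hsplit' : ∑ j ∈ range m, c j = (∑ j ∈ range (m - 1), c j) + c (m - 1) := by
      conv_lhs => rw [show m = (m - 1) + 1 by omega]
      rw [Finset.sum_range_succ]
    rw [hsplit']
    have hA : ∑ j ∈ range (m - 1), c j ≤ ∑ t ∈ Finset.Ico (pn 0) (pn (m - 1)), g t := by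
      rw [← tel (m - 1) (le_refl _)]
      exact Finset.sum_le_sum fun j hj => hchain j (Finset.mem_range.mp hj)
    have htour : tourWeight d σ = ∑ t ∈ range n, g t := chr_tour_eq d σ
    have hfull : (∑ t ∈ range (pn 0), g t) + (∑ t ∈ Finset.Ico (pn 0) (pn (m - 1)), g t)
        + (∑ t ∈ Finset.Ico (pn (m - 1)) n, g t) = ∑ t ∈ range n, g t := by
      rw [Finset.range_eq_Ico,
        Finset.sum_Ico_consecutive g (Nat.zero_le _) (hpn_mono' 0 (m - 1) (by omega) (by omega)),
        Finset.sum_Ico_consecutive g (Nat.zero_le _) (hpn_le (m - 1)), ← Finset.range_eq_Ico]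
    have hw := hwrap
    linarith
  calc setWeight d M1 + setWeight d M2
      ≤ (∑ j ∈ range k, d (x ((2 * j + 0 : ℕ) : Fin m)) (x ((2 * j + 0 + 1 : ℕ) : Fin m)))
        + ∑ j ∈ range k, d (x ((2 * j + 1 : ℕ) : Fin m)) (x ((2 * j + 1 + 1 : ℕ) : Fin m)) :=
        add_le_add hw1 hw2
    _ = ∑ j ∈ range m, c j := hsum12
    _ ≤ tourWeight d σ := hctot

theorem christofides_combination_bound {V : Type*} [Fintype V] [DecidableEq V]
    {n : ℕ} [NeZero n] (hn : n = Fintype.card V) (hn2 : 2 ≤ n)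
    (d : V → V → ℝ)
    (hd0 : ∀ a b, 0 ≤ d a b) (hdsym : ∀ a b, d a b = d b a)
    (hdtri : ∀ a b c, d a c ≤ d a b + d b c)
    (T Tstar : Finset (Sym2 V))
    (hT : IsSpanningTree T) (hTstar : IsSpanningTree Tstar)
    (hTmin : ∀ T', IsSpanningTree T' → setWeight d Tstar ≤ setWeight d T')
    (M Mstar : Finset (Sym2 V))
    (hM : IsPerfectMatchingOn (oddVerts T) M)
    (hMstar : IsPerfectMatchingOn (oddVerts T) Mstar)
    (hMmin : ∀ M', IsPerfectMatchingOn (oddVerts T) M' →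
      setWeight d Mstar ≤ setWeight d M')
    (A Astar : Fin n ≃ V)
    (hAstar : ∀ σ : Fin n ≃ V, tourWeight d Astar ≤ tourWeight d σ)
    (hshortcut : tourWeight d A ≤ setWeight d T + setWeight d M) :
    (2 / 3) * tourWeight d A - tourWeight d Astar ≤
      (2 / 3) * (setWeight d T - setWeight d Tstar
        + setWeight d M - setWeight d Mstar) := by
  classical
  obtain ⟨T', hT', hwT'⟩ := chr_tree_of_tour hn hn2 d hd0 hdsym Astar
  have htree : setWeight d Tstar ≤ tourWeight d Astar := (hTmin T' hT').trans hwT'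
  have htournn : 0 ≤ tourWeight d Astar := chr_tour_nonneg d hd0 Astar
  obtain ⟨r, hr⟩ := chr_even_oddVerts T hT.1
  by_cases hr0 : r = 0
  · have hU : oddVerts T = ∅ := Finset.card_eq_zero.mp (by omega)
    have hMe : Mstar = ∅ := by
      rcases Finset.eq_empty_or_nonempty Mstar with h | h
      · exact h
      · exfalso
        obtain ⟨e, he⟩ := h
        obtain ⟨⟨a, b⟩, rfl⟩ := e.exists_rep
        have hcount := hMstar.2 a
        rw [hU] at hcount
        simp only [Finset.notMem_empty, if_false] at hcount
        have hmem : s(a, b) ∈ Mstar.filter (fun e => a ∈ e) :=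
          Finset.mem_filter.mpr ⟨he, Sym2.mem_mk_left a b⟩
        rw [Finset.card_eq_zero] at hcount
        rw [hcount] at hmem
        exact Finset.notMem_empty _ hmem
    have hMw : setWeight d Mstar = 0 := by rw [hMe, setWeight, Finset.sum_empty]
    linarith
  · obtain ⟨M1, M2, hM1, hM2, h12⟩ :=
      chr_matchings_of_tour d hd0 hdsym hdtri Astar (oddVerts T) r (by omega) (by omega)
    have hm1 := hMmin M1 hM1
    have hm2 := hMmin M2 hM2
    linarith
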